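/- Let x : Fin c → V and y : Fin (m+1) → V be families of vectors such that the combined family consisting of all x(i) and all y(j) is linearly independent, and let w ∈ V. Suppose that for every j ∈ Fin (m+1), the vector w lies in the span of the set {x(i) : i ∈ Fin c} ∪ {y(j') : j' ∈ Fin (m+1), j' ≠ j}. Then w lies in the span of {x(i) : i ∈ Fin c}. -/

import Mathlib

/-- If the combined family of the `x i` and the `y j` is linearly independent, and `w` lies
in the span of all the `x i` together with all the `y j'` for `j' ≠ j`, for every `j`, then
`w` lies in the span of the `x i` alone. -/
theorem mem_span_of_mem_span_erase
    {F V : Type*} [Field F] [AddCommGroup V] [Module F V]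
    (c m : ℕ) (x : Fin c → V) (y : Fin (m + 1) → V)
    (hind : LinearIndependent F (Sum.elim x y))
    (w : V)
    (hspan : ∀ j : Fin (m + 1),
      w ∈ Submodule.span F (Set.range x ∪ y '' {j' : Fin (m + 1) | j' ≠ j})) :
    w ∈ Submodule.span F (Set.range x) := by
  set p : Submodule F V := Submodule.span F (Set.range x) with hp
  obtain ⟨-, hy, hdisj⟩ := linearIndependent_sum.mp hind
  simp only [Sum.elim_comp_inl, Sum.elim_comp_inr] at hy hdisj
  set q : V →ₗ[F] V ⧸ p := p.mkQ with hq
  have hz : LinearIndependent F (q ∘ y) := hy.map (by rw [hq, Submodule.ker_mkQ]; exact hdisj.symm)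
  have hqw : ∀ j : Fin (m + 1), q w ∈ Submodule.span F ((q ∘ y) '' {j' | j' ≠ j}) := by
    intro j
    have h1 : q w ∈ Submodule.map q
        (Submodule.span F (Set.range x ∪ y '' {j' : Fin (m + 1) | j' ≠ j})) :=
      Submodule.mem_map_of_mem (hspan j)
    rw [Submodule.map_span] at h1
    refine Submodule.span_le.mpr ?_ h1
    rintro v ⟨u, hu | hu, rfl⟩
    · obtain ⟨i, rfl⟩ := hu
      have : q (x i) = 0 := by
        rw [hq, Submodule.mkQ_apply, Submodule.Quotient.mk_eq_zero]
        exact Submodule.subset_span ⟨i, rfl⟩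
      rw [this]; exact Submodule.zero_mem _
    · obtain ⟨j', hj', rfl⟩ := hu
      exact Submodule.subset_span ⟨j', hj', rfl⟩
  -- get a representation supported away from 0, and show it's zero
  obtain ⟨l, hl, hlw⟩ := (Finsupp.mem_span_image_iff_linearCombination F).mp (hqw 0)
  have hl0 : l = 0 := by
    ext j
    obtain ⟨l', hl', hlw'⟩ := (Finsupp.mem_span_image_iff_linearCombination F).mp (hqw j)
    have : l = l' := hz (by rw [hlw, hlw'])
    rw [this]
    exact Finsupp.notMem_support_iff.mp (fun hmem => hl' hmem rfl)
  have : q w = 0 := by rw [← hlw, hl0, map_zero]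
  rwa [hq, Submodule.mkQ_apply, Submodule.Quotient.mk_eq_zero] at this
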